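/- arXiv:1303.1646 — 3 statements merged into one kernel-verified Lean document; each statement's English description precedes it below -/
import Mathlib

section
/- Lower bound construction for the proof template under uniform pricing: consider k = 1 unit and 2 bidders with valuations v_1(1) = 1 and v_2(1) = 1/2, bids b_1 = b_2 = 1/2, and ties resolved in favor of bidder 2 (so bidder 2 wins the unit and pays the losing bid 1/2, hence β_1(b) = 1/2 and the optimal welfare is SW(v, x^v) = 1). Then for every deviation bid b'_1 ≥ 0 of bidder 1, u_1^{v_1}(b'_1, b_2) ≤ 1/2, and for every no-overbidding deviation b'_2 ∈ [0, 1/2] of bidder 2, u_2^{v_2}(b'_2, b_1) ≤ 0; consequently, for every μ ≥ 0 and every λ > (1+μ)/2, u_1^{v_1}(b'_1, b_2) + u_2^{v_2}(b'_2, b_1) < λ·SW(v, x^v) − μ·β_1(b). In particular, no upper bound better than 2 on the Price of Anarchy of the Uniform Price Auction can be derived through the smoothness-type proof template. -/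
open Finset MeasureTheory

noncomputable section

/-- A bid vector for an auction of `k` units: entry `j` is the `(j+1)`-st marginal bid. -/
abbrev Bid (k : ℕ) := Fin k → ℝ

/-- Standard bid vectors: non-increasing and non-negative. -/
def StdBid {k : ℕ} (b : Bid k) : Prop :=
  (∀ j j' : Fin k, j ≤ j' → b j' ≤ b j) ∧ ∀ j, 0 ≤ b j

/-- Uniform bid vectors: a common value `c ≥ 0` on the first `q ≤ k` entries, `0` afterwards. -/
def UnifBid {k : ℕ} (b : Bid k) : Prop :=
  ∃ c : ℝ, 0 ≤ c ∧ ∃ q : ℕ, q ≤ k ∧ ∀ j : Fin k, b j = if (j : ℕ) < q then c else 0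

/-- A valuation on `{0,…,k}`: zero at `0`, non-negative and non-decreasing (up to `k`). -/
def IsValuation (k : ℕ) (v : ℕ → ℝ) : Prop :=
  v 0 = 0 ∧ (∀ x, 0 ≤ v x) ∧ ∀ x y : ℕ, x ≤ y → y ≤ k → v x ≤ v y

/-- Submodularity: non-increasing marginal values `v j - v (j-1)`. -/
def SubmodularVal (k : ℕ) (v : ℕ → ℝ) : Prop :=
  ∀ x y : ℕ, 1 ≤ x → x < y → y ≤ k → v y - v (y - 1) ≤ v x - v (x - 1)

/-- Subadditivity. -/
def SubadditiveVal (k : ℕ) (v : ℕ → ℝ) : Prop :=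
  ∀ x y : ℕ, x + y ≤ k → v (x + y) ≤ v x + v y

/-- `x` is a valid allocation for the bidding profile `b`:
all `k` units are allocated, and every winning bid is at least every losing bid. -/
def ValidAlloc {n k : ℕ} (b : Fin n → Bid k) (x : Fin n → ℕ) : Prop :=
  (∑ i, x i) = k ∧
  ∀ i i' : Fin n, ∀ j j' : Fin k, (j : ℕ) < x i → x i' ≤ (j' : ℕ) → b i' j' ≤ b i j

/-- The sum of the first `x` entries of a bid vector. -/
def winSum {k : ℕ} (b : Bid k) (x : ℕ) : ℝ :=
  ∑ j : Fin k, if (j : ℕ) < x then b j else 0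

/-- No-overbidding of the bid vector `b` with respect to the valuation `v`. -/
def NoOverbid {k : ℕ} (v : ℕ → ℝ) (b : Bid k) : Prop :=
  ∀ s : ℕ, 1 ≤ s → s ≤ k → winSum b s ≤ v s

/-- The `j`-th highest element of a multiset of reals (`j` is 1-indexed; default `0`). -/
def kthHighest (s : Multiset ℝ) (j : ℕ) : ℝ :=
  ((s.sort (· ≤ ·)).reverse).getD (j - 1) 0

/-- The multiset of all bids submitted under the profile `b`. -/
def allBids {n k : ℕ} (b : Fin n → Bid k) : Multiset ℝ :=
  (Finset.univ : Finset (Fin n × Fin k)).val.map fun p => b p.1 p.2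

/-- The multiset of all bids submitted by the bidders other than `i`. -/
def othersBids {n k : ℕ} (b : Fin n → Bid k) (i : Fin n) : Multiset ℝ :=
  ((Finset.univ : Finset (Fin n × Fin k)).filter (fun p => p.1 ≠ i)).val.map
    fun p => b p.1 p.2

/-- `β_j` (1-indexed): the `j`-th lowest among the `k` highest elements of `s`,
i.e. the `(k+1-j)`-th highest element of `s`. -/
def betaBid (k : ℕ) (s : Multiset ℝ) (j : ℕ) : ℝ := kthHighest s (k + 1 - j)

/-- `∑_{j=1}^{x} β_j(s)`. -/
def betaSum (k : ℕ) (s : Multiset ℝ) (x : ℕ) : ℝ := ∑ j ∈ Finset.Icc 1 x, betaBid k s j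

/-- The uniform price: the `(k+1)`-st highest of all submitted bids (`0` by default). -/
def price {n k : ℕ} (b : Fin n → Bid k) : ℝ := kthHighest (allBids b) (k + 1)

/-- Discriminatory-pricing utility of bidder `i` under the allocation rule `X`. -/
def uDisc {n k : ℕ} (X : (Fin n → Bid k) → Fin n → ℕ) (v : ℕ → ℝ) (i : Fin n)
    (b : Fin n → Bid k) : ℝ :=
  v (X b i) - winSum (b i) (X b i)

/-- Uniform-pricing utility of bidder `i` under the allocation rule `X`. -/
def uUnif {n k : ℕ} (X : (Fin n → Bid k) → Fin n → ℕ) (v : ℕ → ℝ) (i : Fin n)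
    (b : Fin n → Bid k) : ℝ :=
  v (X b i) - (X b i : ℝ) * price b

/-- The `x`-th entry (1-indexed) of a bid vector, with the convention that it is `0`
for `x = 0` (or `x > k`). -/
def lastWinBid {k : ℕ} (b : Bid k) (x : ℕ) : ℝ :=
  if h : 1 ≤ x ∧ x ≤ k then b ⟨x - 1, by omega⟩ else 0

/-- Social welfare of the allocation `x` under the valuation profile `v`. -/
def SW {n : ℕ} (v : Fin n → ℕ → ℝ) (x : Fin n → ℕ) : ℝ := ∑ i, v i (x i)

lemma sort_pair (x y : ℝ) (h : x ≤ y) : ({x,y} : Multiset ℝ).sort (· ≤ ·) = [x,y] := by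
  have hp : (({x,y} : Multiset ℝ).sort (· ≤ ·)).Perm [x, y] :=
    Multiset.coe_eq_coe.mp ((Multiset.sort_eq _ _).trans rfl)
  exact List.Perm.eq_of_pairwise' (Multiset.pairwise_sort _ _) (by simp [List.pairwise_cons, h]) hp

lemma kth1 (x y : ℝ) : kthHighest {x,y} 1 = max x y := by
  rcases le_total x y with h | h
  · rw [kthHighest, sort_pair x y h]; simp [max_eq_right h]
  · rw [kthHighest, Multiset.pair_comm, sort_pair y x h]; simp [max_eq_left h]

lemma kth2 (x y : ℝ) : kthHighest {x,y} 2 = min x y := by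
  rcases le_total x y with h | h
  · rw [kthHighest, sort_pair x y h]; simp [min_eq_left h]
  · rw [kthHighest, Multiset.pair_comm, sort_pair y x h]; simp [min_eq_right h]


/-- Lower bound construction for the proof template under uniform
pricing: one unit, two bidders, `v₁(1) = 1`, `v₂(1) = 1/2`, bids `b₁ = b₂ = 1/2`,
ties resolved in favor of bidder `2`. Then `β₁(b) = 1/2`, the optimal welfare is `1`,
every deviation of bidder `1` yields utility at most `1/2`, every no-overbidding
deviation of bidder `2` yields utility at most `0`, and hence for all `μ ≥ 0` and
`λ > (1+μ)/2` the smoothness inequality `u₁ + u₂ < λ·SW(v,x^v) - μ·β₁(b)` fails to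
be satisfiable. -/
theorem stmt14
    -- the allocation rule; ties are broken in favor of bidder `2` (index `1`)
    (X : (Fin 2 → Bid 1) → Fin 2 → ℕ)
    (hX : ∀ b, ValidAlloc b (X b))
    (hfav : ∀ b y, ValidAlloc b y → y 1 ≤ X b 1)
    -- the valuations
    (v : Fin 2 → ℕ → ℝ)
    (hv : v = fun (i : Fin 2) (x : ℕ) =>
      if x = 0 then 0 else if i.val = 0 then 1 else 1 / 2)
    -- both bidders bid `1/2`
    (b : Fin 2 → Bid 1)
    (hb : b = fun _ _ => 1 / 2) :
    -- `β₁(b) = 1/2`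
    betaBid 1 (allBids b) 1 = 1 / 2 ∧
    -- the optimal social welfare equals `1`
    (∀ y : Fin 2 → ℕ, (∑ i, y i) = 1 → SW v y ≤ 1) ∧
    SW v (fun i : Fin 2 => if i.val = 0 then 1 else 0) = 1 ∧
    -- every deviation of bidder `1` gives utility at most `1/2`
    (∀ b1' : Bid 1, (∀ j, 0 ≤ b1' j) →
      uUnif X (v 0) 0 (Function.update b 0 b1') ≤ 1 / 2) ∧
    -- every no-overbidding deviation of bidder `2` gives utility at most `0`
    (∀ b2' : Bid 1, (∀ j, 0 ≤ b2' j ∧ b2' j ≤ 1 / 2) →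
      uUnif X (v 1) 1 (Function.update b 1 b2') ≤ 0) ∧
    -- consequently, for every `μ ≥ 0` and `λ > (1+μ)/2` the smoothness
    -- inequality fails
    (∀ mu lam : ℝ, 0 ≤ mu → (1 + mu) / 2 < lam →
      ∀ b1' b2' : Bid 1, (∀ j, 0 ≤ b1' j) → (∀ j, 0 ≤ b2' j ∧ b2' j ≤ 1 / 2) →
        uUnif X (v 0) 0 (Function.update b 0 b1') +
            uUnif X (v 1) 1 (Function.update b 1 b2')
          < lam * 1 - mu * betaBid 1 (allBids b) 1) := by
  subst hv hb
  have hall : ∀ (c : Fin 2 → Bid 1), allBids c = {c 0 0, c 1 0} := fun c => rfl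
  have hbeta : betaBid 1 (allBids (fun _ _ => (1:ℝ)/2 : Fin 2 → Bid 1)) 1 = 1/2 := by
    rw [betaBid, hall, show (1+1-1:ℕ) = 1 from rfl, kth1]
    norm_num
  have hpart2 : ∀ y : Fin 2 → ℕ, (∑ i, y i) = 1 →
      SW (fun (i : Fin 2) (x : ℕ) => if x = 0 then 0 else if i.val = 0 then 1 else 1/2) y ≤ 1 := by
    intro y hy
    rw [Fin.sum_univ_two] at hy
    rw [SW, Fin.sum_univ_two]
    have : y 0 = 0 ∧ y 1 = 1 ∨ y 0 = 1 ∧ y 1 = 0 := by omega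
    rcases this with ⟨h0, h1⟩ | ⟨h0, h1⟩ <;> simp [h0, h1] <;> norm_num
  have hpart4 : ∀ b1' : Bid 1, (∀ j, 0 ≤ b1' j) →
      uUnif X (fun x : ℕ => if x = 0 then (0:ℝ) else 1) 0
        (Function.update (fun _ _ => (1:ℝ)/2 : Fin 2 → Bid 1) 0 b1') ≤ 1/2 := by
    intro b1' hpos
    set c := Function.update (fun _ _ => (1:ℝ)/2 : Fin 2 → Bid 1) 0 b1' with hc
    have hc0 : c 0 = b1' := Function.update_self _ _ _
    have hc1 : c 1 = fun _ => (1:ℝ)/2 := Function.update_of_ne (by decide) _ _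
    obtain ⟨hsum, hord⟩ := hX c
    rw [Fin.sum_univ_two] at hsum
    rw [uUnif]
    by_cases h0 : X c 0 = 0
    · simp [h0]
    · have h1 : X c 0 = 1 ∧ X c 1 = 0 := by omega
      have hge : c 1 0 ≤ c 0 0 := hord 0 1 0 0 (by omega) (by omega)
      rw [hc0, hc1] at hge
      have hpr : price c = 1/2 := by
        rw [price, hall, hc0, hc1]
        rw [show (1+1 : ℕ) = 2 from rfl, kth2]
        simp only [min_def]
        split <;> [linarith [hge]; rfl]
      rw [h1.1, hpr]
      norm_num
  have hpart5 : ∀ b2' : Bid 1, (∀ j, 0 ≤ b2' j ∧ b2' j ≤ 1/2) →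
      uUnif X (fun x : ℕ => if x = 0 then (0:ℝ) else 1/2) 1
        (Function.update (fun _ _ => (1:ℝ)/2 : Fin 2 → Bid 1) 1 b2') ≤ 0 := by
    intro b2' hbd
    set c := Function.update (fun _ _ => (1:ℝ)/2 : Fin 2 → Bid 1) 1 b2' with hc
    have hc1 : c 1 = b2' := Function.update_self _ _ _
    have hc0 : c 0 = fun _ => (1:ℝ)/2 := Function.update_of_ne (by decide) _ _
    obtain ⟨hsum, hord⟩ := hX c
    rw [Fin.sum_univ_two] at hsum
    rw [uUnif]
    by_cases h0 : X c 1 = 0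
    · simp [h0]
    · have h1 : X c 1 = 1 ∧ X c 0 = 0 := by omega
      have hge : c 0 0 ≤ c 1 0 := hord 1 0 0 0 (by omega) (by omega)
      rw [hc0, hc1] at hge
      have heq : b2' 0 = 1/2 := le_antisymm (hbd 0).2 hge
      have hpr : price c = 1/2 := by
        rw [price, hall, hc0, hc1, heq]
        rw [show (1+1 : ℕ) = 2 from rfl, kth2]
        norm_num
      rw [h1.1, hpr]
      norm_num
  refine ⟨hbeta, hpart2, ?_, hpart4, hpart5, ?_⟩
  · rw [SW, Fin.sum_univ_two]; norm_num
  · intro mu lam hmu hlam b1' b2' h1 h2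
    refine lt_of_le_of_lt (add_le_add (hpart4 b1' h1) (hpart5 b2' h2)) ?_
    rw [hbeta]
    linarith

end
end

section
/- Pure Nash equilibria of the Discriminatory Auction are efficient: let v = (v_1,…,v_n) be arbitrary valuations (non-negative, non-decreasing, v_i(0) = 0), with n ≥ 2 bidders and k units, and let b be a bidding profile that is a pure Nash equilibrium under discriminatory pricing, i.e., no bidder i can strictly increase u_i^{v_i} by unilaterally deviating to any non-increasing non-negative bid vector b'_i (for any allocation consistent with the allocation rule after the deviation). Then the equilibrium allocation is welfare-optimal: SW(v, x(b)) = SW(v, x^v). -/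
open Finset MeasureTheory

noncomputable section

namespace Stmt17Aux

lemma kth_le {m : Multiset ℝ} {p : ℝ} (r : ℕ) (h0 : 0 ≤ p) (h : ∀ a ∈ m, a ≤ p) :
    kthHighest m r ≤ p := by
  unfold kthHighest
  set l := (m.sort (· ≤ ·)).reverse with hl
  rcases lt_or_ge (r - 1) l.length with hlt | hge
  · rw [List.getD_eq_getElem _ _ hlt]
    apply h
    have h3 : ∀ a ∈ l, a ∈ m := by
      intro a ha
      rw [hl, List.mem_reverse, Multiset.mem_sort] at ha
      exact ha
    exact h3 _ (List.getElem_mem hlt)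
  · rw [List.getD_eq_default _ _ hge]
    exact h0

lemma kth_nonneg {m : Multiset ℝ} (r : ℕ) (h : ∀ a ∈ m, 0 ≤ a) :
    0 ≤ kthHighest m r := by
  unfold kthHighest
  set l := (m.sort (· ≤ ·)).reverse with hl
  rcases lt_or_ge (r - 1) l.length with hlt | hge
  · rw [List.getD_eq_getElem _ _ hlt]
    apply h
    have h3 : ∀ a ∈ l, a ∈ m := by
      intro a ha
      rw [hl, List.mem_reverse, Multiset.mem_sort] at ha
      exact ha
    exact h3 _ (List.getElem_mem hlt)
  · rw [List.getD_eq_default _ _ hge]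

end Stmt17Aux
namespace Stmt17Aux2
open Stmt17Aux

lemma list_setup (m : Multiset ℝ) :
    ∃ l : List ℝ, (↑l : Multiset ℝ) = m ∧
      (∀ (i j : ℕ) (hi : i < l.length) (hj : j < l.length), i ≤ j → l[j] ≤ l[i]) ∧
      ∀ r : ℕ, kthHighest m r = l.getD (r-1) 0 := by
  refine ⟨(m.sort (· ≤ ·)).reverse, ?_, ?_, fun r => rfl⟩
  · rw [Multiset.coe_reverse, Multiset.sort_eq]
  · have hpw : ((m.sort (· ≤ ·)).reverse).Pairwise (fun a b => b ≤ a) := by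
      rw [List.pairwise_reverse]
      exact Multiset.pairwise_sort _ _
    have h := List.pairwise_iff_getElem.mp hpw
    intro i j hi hj hij
    rcases eq_or_lt_of_le hij with rfl | hlt
    · exact le_refl _
    · exact h i j hi hj hlt

lemma count_gt_kth (m : Multiset ℝ) (r : ℕ) :
    (m.filter (fun a => kthHighest m r < a)).card ≤ r - 1 := by
  classical
  obtain ⟨l, hlm, hmono, hkth⟩ := list_setup m
  have hcard : (m.filter (fun a => kthHighest m r < a)).card
      = (l.filter (fun a => kthHighest m r < a)).length := by
    rw [← hlm, Multiset.filter_coe, Multiset.coe_card]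
  rw [hcard]
  rcases lt_or_ge (r - 1) l.length with hlt | hge
  · have htv : kthHighest m r = l[r-1] := by
      rw [hkth r, List.getD_eq_getElem _ _ hlt]
    have hsplit : l.filter (fun a => kthHighest m r < a)
        = (l.take (r-1)).filter (fun a => kthHighest m r < a)
          ++ (l.drop (r-1)).filter (fun a => kthHighest m r < a) := by
      rw [← List.filter_append, List.take_append_drop]
    have hdrop : (l.drop (r-1)).filter (fun a => kthHighest m r < a) = [] := by
      rw [List.filter_eq_nil_iff]
      intro a ha
      rw [List.mem_iff_getElem] at ha
      obtain ⟨idx, hidx, rfl⟩ := ha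
      rw [List.getElem_drop]
      simp only [decide_eq_true_eq, not_lt]
      rw [htv]
      have hidx' : r - 1 + idx < l.length := by
        have := hidx; simp [List.length_drop] at this; omega
      exact hmono (r-1) (r-1+idx) hlt hidx' (Nat.le_add_right _ _)
    rw [hsplit, hdrop]
    simp only [List.append_nil]
    calc ((l.take (r-1)).filter _).length ≤ (l.take (r-1)).length := List.length_filter_le _ _
      _ ≤ r - 1 := by simp [List.length_take]
  · calc (l.filter _).length ≤ l.length := List.length_filter_le _ _
      _ ≤ r - 1 := hge

lemma count_ge_kth (m : Multiset ℝ) (r : ℕ) (hr : 1 ≤ r) (hc : r ≤ Multiset.card m) :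
    r ≤ (m.filter (fun a => kthHighest m r ≤ a)).card := by
  classical
  obtain ⟨l, hlm, hmono, hkth⟩ := list_setup m
  have hlen : l.length = Multiset.card m := by rw [← hlm]; rfl
  have hrl : r ≤ l.length := by omega
  have hlt : r - 1 < l.length := by omega
  have htv : kthHighest m r = l[r-1] := by
    rw [hkth r, List.getD_eq_getElem _ _ hlt]
  have hcard : (m.filter (fun a => kthHighest m r ≤ a)).card
      = (l.filter (fun a => kthHighest m r ≤ a)).length := by
    rw [← hlm, Multiset.filter_coe, Multiset.coe_card]
  rw [hcard]
  have hsplit : l.filter (fun a => kthHighest m r ≤ a)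
      = (l.take r).filter (fun a => kthHighest m r ≤ a)
        ++ (l.drop r).filter (fun a => kthHighest m r ≤ a) := by
    rw [← List.filter_append, List.take_append_drop]
  have htake : (l.take r).filter (fun a => kthHighest m r ≤ a) = l.take r := by
    rw [List.filter_eq_self]
    intro a ha
    rw [List.mem_iff_getElem] at ha
    obtain ⟨idx, hidx, rfl⟩ := ha
    have hidx' : idx < l.length := by
      have := hidx; simp [List.length_take] at this; omega
    rw [List.getElem_take]
    simp only [decide_eq_true_eq]
    rw [htv]
    apply hmono idx (r-1) hidx' hlt
    have := hidx; simp [List.length_take] at this; omega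
  rw [hsplit, List.length_append, htake]
  have : (l.take r).length = r := by simp [List.length_take]; omega
  omega
end Stmt17Aux2
namespace Stmt17Aux3

lemma card_filter_val_lt (k c : ℕ) (hck : c ≤ k) :
    ((Finset.univ : Finset (Fin k)).filter (fun j : Fin k => (j : ℕ) < c)).card = c := by
  have himg : (Finset.univ : Finset (Fin k)).filter (fun j : Fin k => (j : ℕ) < c)
      = Finset.image (Fin.castLE hck) Finset.univ := by
    ext j
    simp only [Finset.mem_filter, Finset.mem_image, Finset.mem_univ, true_and]
    constructor
    · intro hj
      exact ⟨⟨(j : ℕ), hj⟩, rfl⟩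
    · rintro ⟨a, rfl⟩
      exact a.isLt
  rw [himg, Finset.card_image_of_injective _ (Fin.castLE_injective hck)]
  simp

lemma mem_of_lt_card_filter {k : ℕ} {P : Fin k → Prop} [DecidablePred P]
    (hmono : ∀ j j' : Fin k, j ≤ j' → P j' → P j) (j : Fin k)
    (hj : (j : ℕ) < ((Finset.univ : Finset (Fin k)).filter P).card) : P j := by
  by_contra hP
  have hsub : (Finset.univ : Finset (Fin k)).filter P
      ⊆ (Finset.univ : Finset (Fin k)).filter (fun j' : Fin k => (j' : ℕ) < (j : ℕ)) := by
    intro j' hj'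
    simp at hj' ⊢
    by_contra hge
    exact hP (hmono j j' (by omega) hj')
  have := Finset.card_le_card hsub
  rw [card_filter_val_lt k (j : ℕ) (le_of_lt j.isLt)] at this
  omega

lemma lt_card_filter_of_mem {k : ℕ} {P : Fin k → Prop} [DecidablePred P]
    (hmono : ∀ j j' : Fin k, j ≤ j' → P j' → P j) (j : Fin k) (hP : P j) :
    (j : ℕ) < ((Finset.univ : Finset (Fin k)).filter P).card := by
  have hsub : (Finset.univ : Finset (Fin k)).filter (fun j' : Fin k => (j' : ℕ) < (j : ℕ) + 1)
      ⊆ (Finset.univ : Finset (Fin k)).filter P := by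
    intro j' hj'
    simp at hj' ⊢
    exact hmono j' j (by omega) hP
  have := Finset.card_le_card hsub
  rw [card_filter_val_lt k ((j : ℕ) + 1) j.isLt] at this
  omega

lemma card_filter_prod {n k : ℕ} (P : Fin n × Fin k → Prop) [DecidablePred P] :
    ((Finset.univ : Finset (Fin n × Fin k)).filter P).card
      = ∑ i : Fin n, ((Finset.univ : Finset (Fin k)).filter (fun j => P (i, j))).card := by
  rw [Finset.card_filter, Fintype.sum_prod_type]
  congr 1
  ext i
  rw [Finset.card_filter]

end Stmt17Aux3
namespace Stmt17Aux4
open Stmt17Aux3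

lemma card_allBids {n k : ℕ} (B : Fin n → Bid k) : (allBids B).card = n * k := by
  rw [allBids, Multiset.card_map]
  change (Finset.univ : Finset (Fin n × Fin k)).card = n * k
  rw [Finset.card_univ, Fintype.card_prod, Fintype.card_fin, Fintype.card_fin]

lemma card_filter_allBids {n k : ℕ} (B : Fin n → Bid k) (q : ℝ → Prop) [DecidablePred q] :
    ((allBids B).filter q).card
      = ((Finset.univ : Finset (Fin n × Fin k)).filter (fun p => q (B p.1 p.2))).card := by
  classical
  rw [allBids, Multiset.filter_map, Multiset.card_map]
  rfl

lemma card_filter_othersBids {n k : ℕ} (b : Fin n → Bid k) (i : Fin n)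
    (q : ℝ → Prop) [DecidablePred q] :
    ((othersBids b i).filter q).card
      = ((Finset.univ : Finset (Fin n × Fin k)).filter
          (fun p => p.1 ≠ i ∧ q (b p.1 p.2))).card := by
  classical
  rw [othersBids, Multiset.filter_map, Multiset.card_map]
  change ((Finset.univ.filter (fun p : Fin n × Fin k => p.1 ≠ i)).val.filter
    (fun p => q (b p.1 p.2))).card = _
  rw [← Finset.filter_val, Finset.filter_filter]
  rfl

lemma card_othersBids {n k : ℕ} (b : Fin n → Bid k) (i : Fin n) :
    (othersBids b i).card = (n - 1) * k := by
  classical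
  rw [othersBids, Multiset.card_map]
  change ((Finset.univ : Finset (Fin n × Fin k)).filter (fun p => p.1 ≠ i)).card = _
  rw [card_filter_prod]
  have : ∀ i' : Fin n,
      ((Finset.univ : Finset (Fin k)).filter (fun _ => i' ≠ i)).card
        = if i' = i then 0 else k := by
    intro i'
    by_cases h : i' = i
    · simp [h]
    · simp [h, Finset.card_univ]
  rw [Finset.sum_congr rfl (fun i' _ => this i')]
  rw [Finset.sum_ite, Finset.sum_const, Finset.sum_const]
  have h1 : (Finset.univ.filter (fun i' : Fin n => ¬ i' = i)) = Finset.univ.erase i := by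
    ext i'; simp [Finset.mem_erase]
  rw [h1, Finset.card_erase_of_mem (Finset.mem_univ i), Finset.card_univ, Fintype.card_fin]
  simp [Nat.mul_comm]

end Stmt17Aux4
namespace Stmt17Aux5
open Stmt17Aux3

lemma sum_ite_lt_const {k : ℕ} (x : ℕ) (p : ℝ) (hxk : x ≤ k) :
    (∑ j : Fin k, if (j : ℕ) < x then p else 0) = x * p := by
  rw [Finset.sum_ite, Finset.sum_const, Finset.sum_const,
    card_filter_val_lt k x hxk]
  simp

lemma winSum_zero {k : ℕ} (b : Bid k) : winSum b 0 = 0 := by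
  simp [winSum]

lemma winSum_eq_of_const {k : ℕ} (b : Bid k) (x : ℕ) (p : ℝ) (hxk : x ≤ k)
    (h : ∀ j : Fin k, (j : ℕ) < x → b j = p) : winSum b x = x * p := by
  rw [winSum, ← sum_ite_lt_const (k := k) x p hxk]
  apply Finset.sum_congr rfl
  intro j _
  by_cases hj : (j : ℕ) < x
  · simp [hj, h j hj]
  · simp [hj]

lemma winSum_unif {k : ℕ} (c : ℝ) (s x : ℕ) (hsk : s ≤ k) (hsx : s ≤ x) :
    winSum (fun j : Fin k => if (j : ℕ) < s then c else 0) x = s * c := by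
  rw [winSum, ← sum_ite_lt_const (k := k) s c hsk]
  apply Finset.sum_congr rfl
  intro j _
  by_cases hj : (j : ℕ) < s
  · simp [hj, lt_of_lt_of_le hj hsx]
  · simp [hj]

lemma winSum_le_of_forall_le {k : ℕ} (b : Bid k) (x : ℕ) (p : ℝ) (hxk : x ≤ k)
    (h : ∀ j : Fin k, (j : ℕ) < x → p ≤ b j) : x * p ≤ winSum b x := by
  rw [winSum, ← sum_ite_lt_const (k := k) x p hxk]
  apply Finset.sum_le_sum
  intro j _
  by_cases hj : (j : ℕ) < x
  · simp only [hj, if_true]; exact h j hj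
  · simp [hj]

lemma winSum_zero_bid {k : ℕ} (x : ℕ) :
    winSum (fun _ : Fin k => (0:ℝ)) x = 0 := by
  simp [winSum]

end Stmt17Aux5
namespace Stmt17Aux6
open Stmt17Aux Stmt17Aux2 Stmt17Aux3 Stmt17Aux4

lemma exists_validAlloc {n k : ℕ} (hn : 1 ≤ n) (hk : 1 ≤ k)
    (B : Fin n → Bid k) (hB : ∀ i, StdBid (B i)) : ∃ y, ValidAlloc B y := by
  classical
  set t := kthHighest (allBids B) k with ht
  set A : Fin n → ℕ := fun i =>
    ((Finset.univ : Finset (Fin k)).filter (fun j : Fin k => t < B i j)).card with hA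
  set G : Fin n → ℕ := fun i =>
    ((Finset.univ : Finset (Fin k)).filter (fun j : Fin k => t ≤ B i j)).card with hG
  have hAG : ∀ i, A i ≤ G i := by
    intro i
    apply Finset.card_le_card
    exact Finset.monotone_filter_right _ (fun j _ hj => le_of_lt hj)
  set E : ℕ → ℕ := fun c => if h : c < n then G ⟨c, h⟩ - A ⟨c, h⟩ else 0 with hE
  set S : ℕ → ℕ := fun c => ∑ a ∈ Finset.range c, E a with hS
  have hSmono : Monotone S := by
    intro c d hcd
    exact Finset.sum_le_sum_of_subset (Finset.range_subset_range.mpr hcd)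
  have hSsucc : ∀ c, S (c + 1) = S c + E c := fun c => Finset.sum_range_succ E c
  have hAsum : (∑ i, A i) ≤ k - 1 := by
    have h1 : ((allBids B).filter (fun a => t < a)).card ≤ k - 1 := count_gt_kth _ k
    rw [card_filter_allBids, card_filter_prod] at h1
    exact h1
  have hGsum : k ≤ ∑ i, G i := by
    have h0 : k ≤ (allBids B).card := by
      rw [card_allBids]
      calc k = 1 * k := (one_mul k).symm
        _ ≤ n * k := Nat.mul_le_mul_right k hn
    have h1 : k ≤ ((allBids B).filter (fun a => t ≤ a)).card := count_ge_kth _ k hk h0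
    rw [card_filter_allBids, card_filter_prod] at h1
    exact h1
  set R := k - ∑ i, A i with hR
  set w : Fin n → ℕ := fun i => min R (S ((i : ℕ) + 1)) - min R (S (i : ℕ)) with hw
  set y : Fin n → ℕ := fun i => A i + w i with hy
  have hEval : ∀ i : Fin n, E (i : ℕ) = G i - A i := by
    intro i
    rw [hE]
    simp only [i.isLt, dif_pos]
  have hSn : R ≤ S n := by
    have h2 : S n = ∑ i : Fin n, (G i - A i) := by
      simp only [hS]
      rw [← Fin.sum_univ_eq_sum_range E n]
      exact Finset.sum_congr rfl (fun i _ => hEval i)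
    have h3 : (∑ i : Fin n, (G i - A i)) + ∑ i, A i = ∑ i, G i := by
      rw [← Finset.sum_add_distrib]
      apply Finset.sum_congr rfl
      intro i _
      exact Nat.sub_add_cancel (hAG i)
    omega
  have hwE : ∀ i : Fin n, w i ≤ E (i : ℕ) := by
    intro i
    have h1 := hSsucc (i : ℕ)
    have h2 : min R (S ((i : ℕ) + 1)) ≤ min R (S (i : ℕ)) + E (i : ℕ) := by
      rcases le_total R (S (i : ℕ)) with h | h
      · calc min R (S ((i : ℕ) + 1)) ≤ R := min_le_left _ _
          _ = min R (S (i : ℕ)) := (min_eq_left h).symm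
          _ ≤ _ := Nat.le_add_right _ _
      · calc min R (S ((i : ℕ) + 1)) ≤ S ((i : ℕ) + 1) := min_le_right _ _
          _ = S (i : ℕ) + E (i : ℕ) := h1
          _ = min R (S (i : ℕ)) + E (i : ℕ) := by rw [min_eq_right h]
    have h3 : w i = min R (S ((i : ℕ) + 1)) - min R (S (i : ℕ)) := rfl
    omega
  have hyG : ∀ i, y i ≤ G i := by
    intro i
    have h1 := hwE i
    have h2 := hEval i
    have h3 := hAG i
    have h4 : y i = A i + w i := rfl
    omega
  have hAy : ∀ i, A i ≤ y i := by
    intro i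
    exact Nat.le_add_right _ _
  have hsum : ∑ i, y i = k := by
    have hw_sum : ∑ i : Fin n, w i = R := by
      have h1 : ∑ i : Fin n, w i
          = ∑ c ∈ Finset.range n, (min R (S (c + 1)) - min R (S c)) := by
        simp only [hw]
        exact Fin.sum_univ_eq_sum_range (fun c => min R (S (c + 1)) - min R (S c)) n
      rw [h1, Finset.sum_range_tsub
        (f := fun c => min R (S c)) (fun a b hab => min_le_min (le_refl R) (hSmono hab)) n]
      have hS0 : S 0 = 0 := rfl
      rw [hS0, min_eq_left hSn]
      omega
    have h5 : ∑ i, y i = (∑ i, A i) + ∑ i : Fin n, w i := by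
      rw [← Finset.sum_add_distrib]
    omega
  refine ⟨y, hsum, ?_⟩
  intro i i' j j' hj hj'
  have hBij : t ≤ B i j := by
    apply mem_of_lt_card_filter (P := fun j => t ≤ B i j)
      (fun j1 j2 h12 hP => le_trans hP ((hB i).1 j1 j2 h12))
    exact lt_of_lt_of_le hj (hyG i)
  have hBij' : ¬ (t < B i' j') := by
    intro hlt
    have h1 := lt_card_filter_of_mem (P := fun j => t < B i' j)
      (fun j1 j2 h12 hP => lt_of_lt_of_le hP ((hB i').1 j1 j2 h12)) j' hlt
    have h2 : A i' ≤ y i' := hAy i'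
    have h3 : A i' = ((Finset.univ : Finset (Fin k)).filter (fun j : Fin k => t < B i' j)).card := rfl
    omega
  linarith [not_lt.mp hBij']

end Stmt17Aux6

/-- Pure Nash equilibria of the Discriminatory Auction are
efficient: for arbitrary valuations, `n ≥ 2` bidders and `k` units, if no bidder can
strictly increase his discriminatory-pricing utility by unilaterally deviating to any
non-increasing non-negative bid vector (under any allocation consistent with the
allocation rule after the deviation), then the equilibrium allocation is
welfare-optimal. -/
theorem stmt17 (n k : ℕ) (hk : 1 ≤ k) (hn : 2 ≤ n)
    -- arbitrary valuations
    (v : Fin n → ℕ → ℝ) (hv : ∀ i, IsValuation k (v i))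
    -- the equilibrium bidding profile and its allocation
    (b : Fin n → Bid k) (hb : ∀ i, StdBid (b i))
    (x : Fin n → ℕ) (hx : ValidAlloc b x)
    -- `b` is a pure Nash equilibrium
    (hNE : ∀ (i : Fin n) (b' : Bid k), StdBid b' →
      ∀ y : Fin n → ℕ, ValidAlloc (Function.update b i b') y →
        v i (y i) - winSum b' (y i) ≤ v i (x i) - winSum (b i) (x i))
    -- a welfare-optimal allocation
    (xopt : Fin n → ℕ) (hxoptk : (∑ i, xopt i) = k)
    (hxoptmax : ∀ y : Fin n → ℕ, (∑ i, y i) = k → SW v y ≤ SW v xopt) :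
    SW v x = SW v xopt := by

  classical
  set u : Fin n → ℝ := fun i => v i (x i) - winSum (b i) (x i) with hu
  have hui : ∀ i, u i = v i (x i) - winSum (b i) (x i) := fun _ => rfl
  set γ : Fin n → ℕ → ℝ := fun i s => kthHighest (othersBids b i) (k - s + 1) with hγ
  have hvnn : ∀ i xx, 0 ≤ v i xx := fun i => (hv i).2.1
  have hvmono : ∀ i a c, a ≤ c → c ≤ k → v i a ≤ v i c := fun i => (hv i).2.2
  have hv0 : ∀ i, v i 0 = 0 := fun i => (hv i).1
  have hbnn : ∀ i j, 0 ≤ b i j := fun i => (hb i).2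
  have hothers_nn : ∀ i, ∀ a ∈ othersBids b i, 0 ≤ a := by
    intro i a ha
    rw [othersBids, Multiset.mem_map] at ha
    obtain ⟨q, _, rfl⟩ := ha
    exact hbnn q.1 q.2
  have hγnn : ∀ i s, 0 ≤ γ i s := fun i s => Stmt17Aux.kth_nonneg _ (hothers_nn i)
  have hxk : ∀ i, x i ≤ k := by
    intro i
    rw [← hx.1]
    exact Finset.single_le_sum (f := x) (fun _ _ => Nat.zero_le _) (Finset.mem_univ i)
  have hcard_oth_win : ∀ (i : Fin n) (z : Fin n → ℕ), (∑ i', z i') = k →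
      ((Finset.univ : Finset (Fin n × Fin k)).filter
        (fun q => q.1 ≠ i ∧ (q.2 : ℕ) < z q.1)).card = k - z i := by
    intro i z hz
    rw [Stmt17Aux3.card_filter_prod]
    have hzk : ∀ i', z i' ≤ k := by
      intro i'
      rw [← hz]
      exact Finset.single_le_sum (f := z) (fun _ _ => Nat.zero_le _) (Finset.mem_univ i')
    have h1 : ∀ i' : Fin n,
        ((Finset.univ : Finset (Fin k)).filter
          (fun j : Fin k => i' ≠ i ∧ (j : ℕ) < z i')).card
          = if i' = i then 0 else z i' := by
      intro i'
      by_cases h : i' = i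
      · simp [h]
      · rw [if_neg h]
        have heq : (fun j : Fin k => i' ≠ i ∧ (j : ℕ) < z i')
            = fun j : Fin k => (j : ℕ) < z i' := by
          ext j; simp [h]
        have heq2 : ((Finset.univ : Finset (Fin k)).filter
            (fun j : Fin k => i' ≠ i ∧ (j : ℕ) < z i'))
            = ((Finset.univ : Finset (Fin k)).filter (fun j : Fin k => (j : ℕ) < z i')) := by
          apply Finset.filter_congr
          intro j _
          simp [h]
        rw [heq2, Stmt17Aux3.card_filter_val_lt k (z i') (hzk i')]
    rw [Finset.sum_congr rfl (fun i' _ => h1 i')]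
    have h2 : (∑ i' : Fin n, if i' = i then 0 else z i') + z i = k := by
      have h3 : ∀ i' : Fin n,
          (if i' = i then 0 else z i') + (if i' = i then z i' else 0) = z i' := by
        intro i'; by_cases h : i' = i <;> simp [h]
      have h4 : (∑ i' : Fin n, if i' = i then z i' else 0) = z i := by
        rw [Finset.sum_ite_eq' Finset.univ i z]
        simp
      calc (∑ i' : Fin n, if i' = i then 0 else z i') + z i
          = (∑ i' : Fin n, if i' = i then 0 else z i')
            + ∑ i' : Fin n, (if i' = i then z i' else 0) := by rw [h4]
        _ = ∑ i' : Fin n, ((if i' = i then 0 else z i') + (if i' = i then z i' else 0)) :=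
            Finset.sum_add_distrib.symm
        _ = ∑ i' : Fin n, z i' := Finset.sum_congr rfl (fun i' _ => h3 i')
        _ = k := hz
    omega
  -- Claim 0 : individual rationality
  have claim0 : ∀ i, 0 ≤ u i := by
    intro i
    have hstd' : StdBid (fun _ : Fin k => (0:ℝ)) := ⟨fun _ _ _ => le_refl 0, fun _ => le_refl 0⟩
    have hBstd : ∀ i', StdBid (Function.update b i (fun _ : Fin k => (0:ℝ)) i') := by
      intro i'
      by_cases h : i' = i
      · rw [h, Function.update_self]; exact hstd'
      · rw [Function.update_of_ne h]; exact hb i'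
    obtain ⟨y, hy⟩ := Stmt17Aux6.exists_validAlloc (by omega) hk _ hBstd
    have hne := hNE i (fun _ : Fin k => (0:ℝ)) hstd' y hy
    rw [Stmt17Aux5.winSum_zero_bid (y i)] at hne
    have h2 := hvnn i (y i)
    rw [hui i]
    linarith
  -- Claim 1 : deviation bound
  have claim1 : ∀ i : Fin n, ∀ s : ℕ, 1 ≤ s → s ≤ k → v i s - s * γ i s ≤ u i := by
    intro i s hs1 hsk
    have key : ∀ ε : ℝ, 0 < ε → v i s - s * (γ i s + ε) ≤ u i := by
      intro ε hε
      set c := γ i s + ε with hc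
      have hcpos : 0 < c := lt_of_le_of_lt (hγnn i s) (by rw [hc]; linarith)
      set b' : Bid k := fun j => if (j : ℕ) < s then c else 0 with hb'
      have hb'val : ∀ j : Fin k, b' j = if (j : ℕ) < s then c else 0 := fun _ => rfl
      have hstd' : StdBid b' := by
        constructor
        · intro j1 j2 h12
          rw [hb'val j1, hb'val j2]
          by_cases h2 : (j2 : ℕ) < s
          · have h1' : (j1 : ℕ) < s := by
              have : (j1 : ℕ) ≤ (j2 : ℕ) := h12
              omega
            rw [if_pos h2, if_pos h1']
          · rw [if_neg h2]
            by_cases h1' : (j1 : ℕ) < s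
            · rw [if_pos h1']; exact le_of_lt hcpos
            · rw [if_neg h1']
        · intro j
          rw [hb'val j]
          by_cases h1' : (j : ℕ) < s
          · rw [if_pos h1']; exact le_of_lt hcpos
          · rw [if_neg h1']
      have hBstd : ∀ i', StdBid (Function.update b i b' i') := by
        intro i'
        by_cases h : i' = i
        · rw [h, Function.update_self]; exact hstd'
        · rw [Function.update_of_ne h]; exact hb i'
      obtain ⟨y, hy⟩ := Stmt17Aux6.exists_validAlloc (by omega) hk _ hBstd
      have hyk : ∀ i', y i' ≤ k := by
        intro i'
        rw [← hy.1]
        exact Finset.single_le_sum (f := y) (fun _ _ => Nat.zero_le _) (Finset.mem_univ i')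
      have hys : s ≤ y i := by
        by_contra hlt
        push_neg at hlt
        have hjl : y i < k := lt_of_lt_of_le hlt hsk
        have hBijl : Function.update b i b' i ⟨y i, hjl⟩ = c := by
          rw [Function.update_self, hb'val]
          exact if_pos hlt
        have hsub : ((Finset.univ : Finset (Fin n × Fin k)).filter
            (fun q => q.1 ≠ i ∧ (q.2 : ℕ) < y q.1))
            ⊆ ((Finset.univ : Finset (Fin n × Fin k)).filter
            (fun q => q.1 ≠ i ∧ γ i s < b q.1 q.2)) := by
          intro q hq
          simp only [Finset.mem_filter, Finset.mem_univ, true_and] at hq ⊢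
          refine ⟨hq.1, ?_⟩
          have h2 := hy.2 q.1 i q.2 ⟨y i, hjl⟩ hq.2 (le_refl _)
          rw [hBijl, Function.update_of_ne hq.1] at h2
          calc γ i s < c := by rw [hc]; linarith
            _ ≤ b q.1 q.2 := h2
        have hcard1 := Finset.card_le_card hsub
        have hcard2 : ((Finset.univ : Finset (Fin n × Fin k)).filter
            (fun q => q.1 ≠ i ∧ γ i s < b q.1 q.2)).card ≤ k - s + 1 - 1 := by
          have h3 := Stmt17Aux2.count_gt_kth (othersBids b i) (k - s + 1)
          rw [Stmt17Aux4.card_filter_othersBids] at h3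
          exact h3
        have hcard3 := hcard_oth_win i y hy.1
        rw [hcard3] at hcard1
        omega
      have hne := hNE i b' hstd' y hy
      have hws : winSum b' (y i) = s * c :=
        Stmt17Aux5.winSum_unif c s (y i) hsk hys
      have hvy : v i s ≤ v i (y i) := hvmono i s (y i) hys (hyk i)
      rw [hws] at hne
      rw [hui i] at *
      calc v i s - s * c ≤ v i (y i) - s * c := by linarith
        _ ≤ _ := hne
    refine le_of_forall_pos_le_add ?_
    intro ε hε
    have hs' : (0:ℝ) < s := by exact_mod_cast hs1
    have h2 := key (ε / s) (div_pos hε hs')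
    have h3 : (s:ℝ) * (γ i s + ε / s) = s * γ i s + ε := by
      field_simp
    calc v i s - (s:ℝ) * γ i s = v i s - (s:ℝ) * (γ i s + ε / s) + ε := by rw [h3]; ring
      _ ≤ u i + ε := by linarith
  -- Claim 2 : every winning bid is at least γ i (x i)
  have claim2 : ∀ i : Fin n, 1 ≤ x i → ∀ (i'' : Fin n) (j : Fin k), (j : ℕ) < x i'' →
      γ i (x i) ≤ b i'' j := by
    intro i hxi i'' j hj
    have hr1 : 1 ≤ k - x i + 1 := by omega
    have hrc : k - x i + 1 ≤ Multiset.card (othersBids b i) := by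
      rw [Stmt17Aux4.card_othersBids]
      have h2 : k ≤ (n - 1) * k := by
        calc k = 1 * k := (one_mul k).symm
          _ ≤ (n - 1) * k := Nat.mul_le_mul_right k (by omega)
      omega
    have hge := Stmt17Aux2.count_ge_kth (othersBids b i) (k - x i + 1) hr1 hrc
    rw [Stmt17Aux4.card_filter_othersBids] at hge
    have hge' : k - x i + 1 ≤ ((Finset.univ : Finset (Fin n × Fin k)).filter
        (fun q => q.1 ≠ i ∧ γ i (x i) ≤ b q.1 q.2)).card := hge
    by_cases hall : ∀ q : Fin n × Fin k, q.1 ≠ i → γ i (x i) ≤ b q.1 q.2 → (q.2 : ℕ) < x q.1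
    · exfalso
      have hsub : ((Finset.univ : Finset (Fin n × Fin k)).filter
          (fun q => q.1 ≠ i ∧ γ i (x i) ≤ b q.1 q.2))
          ⊆ ((Finset.univ : Finset (Fin n × Fin k)).filter
          (fun q => q.1 ≠ i ∧ (q.2 : ℕ) < x q.1)) := by
        intro q hq
        simp only [Finset.mem_filter, Finset.mem_univ, true_and] at hq ⊢
        exact ⟨hq.1, hall q hq.1 hq.2⟩
      have h1 := Finset.card_le_card hsub
      rw [hcard_oth_win i x hx.1] at h1
      omega
    · push_neg at hall
      obtain ⟨q, hq1, hq2, hq3⟩ := hall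
      calc γ i (x i) ≤ b q.1 q.2 := hq2
        _ ≤ b i'' j := hx.2 i'' q.1 j q.2 hj (by omega)
  -- there is a winner
  obtain ⟨i0, hi0⟩ : ∃ i0, 1 ≤ x i0 := by
    by_contra h
    push_neg at h
    have h2 : ∑ i, x i = 0 := Finset.sum_eq_zero (fun i _ => by have := h i; omega)
    rw [hx.1] at h2
    omega
  have hk0 : 0 < k := hk
  set j0 : Fin k := ⟨0, hk0⟩ with hj0
  have hj0x : (j0 : ℕ) < x i0 := hi0
  set p := γ i0 (x i0) with hp
  -- all winning bids are equal to γ i (x i)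
  have hwin_all : ∀ i : Fin n, 1 ≤ x i → ∀ j : Fin k, (j : ℕ) < x i → b i j = γ i (x i) := by
    intro i hxi j hj
    have hle : winSum (b i) (x i) ≤ (x i : ℝ) * γ i (x i) := by
      have h1 := claim1 i (x i) hxi (hxk i)
      rw [hui i] at h1
      linarith
    have hgewin : ∀ j' : Fin k, (j' : ℕ) < x i → γ i (x i) ≤ b i j' :=
      fun j' hj' => claim2 i hxi i j' hj'
    have hge : (x i : ℝ) * γ i (x i) ≤ winSum (b i) (x i) :=
      Stmt17Aux5.winSum_le_of_forall_le _ _ _ (hxk i) hgewin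
    have heq : winSum (b i) (x i) = (x i : ℝ) * γ i (x i) := le_antisymm hle hge
    have hsum_eq : ∑ j' : Fin k, (if (j' : ℕ) < x i then b i j' else 0)
        = ∑ j' : Fin k, (if (j' : ℕ) < x i then γ i (x i) else 0) := by
      have hl : ∑ j' : Fin k, (if (j' : ℕ) < x i then b i j' else 0)
          = winSum (b i) (x i) := rfl
      rw [hl, heq, Stmt17Aux5.sum_ite_lt_const (x i) (γ i (x i)) (hxk i)]
    have hptle : ∀ j' : Fin k, j' ∈ Finset.univ →
        (if (j' : ℕ) < x i then γ i (x i) else 0) ≤ (if (j' : ℕ) < x i then b i j' else 0) := by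
      intro j' _
      by_cases h : (j' : ℕ) < x i
      · rw [if_pos h, if_pos h]; exact hgewin j' h
      · rw [if_neg h, if_neg h]
    have hpt := (Finset.sum_eq_sum_iff_of_le hptle).mp hsum_eq.symm j (Finset.mem_univ j)
    rw [if_pos hj, if_pos hj] at hpt
    exact hpt.symm
  have hγeq : ∀ i, 1 ≤ x i → γ i (x i) = p := by
    intro i hxi
    by_cases h : i = i0
    · rw [h, hp]
    · have hjx : (j0 : ℕ) < x i := hxi
      have h1 : γ i (x i) ≤ b i0 j0 := claim2 i hxi i0 j0 hj0x
      have h2 : γ i0 (x i0) ≤ b i j0 := claim2 i0 hi0 i j0 hjx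
      have h3 : b i0 j0 = γ i0 (x i0) := hwin_all i0 hi0 j0 hj0x
      have h4 : b i j0 = γ i (x i) := hwin_all i hxi j0 hjx
      rw [hp]
      rw [h3] at h1
      rw [h4] at h2
      linarith
  have hpwin : ∀ i, ∀ j : Fin k, (j : ℕ) < x i → b i j = p := by
    intro i j hj
    have hxi : 1 ≤ x i := by omega
    rw [hwin_all i hxi j hj, hγeq i hxi]
  have hpnn : 0 ≤ p := by rw [hp]; exact hγnn i0 (x i0)
  have hall_le : ∀ i (j : Fin k), b i j ≤ p := by
    intro i j
    by_cases hj : (j : ℕ) < x i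
    · rw [hpwin i j hj]
    · push_neg at hj
      have h1 := hx.2 i0 i j0 j hj0x hj
      rw [hpwin i0 j0 hj0x] at h1
      exact h1
  have hγlep : ∀ i s, γ i s ≤ p := by
    intro i s
    apply Stmt17Aux.kth_le _ hpnn
    intro a ha
    rw [othersBids, Multiset.mem_map] at ha
    obtain ⟨q, _, rfl⟩ := ha
    exact hall_le q.1 q.2
  have hpay : ∀ i, winSum (b i) (x i) = (x i : ℝ) * p :=
    fun i => Stmt17Aux5.winSum_eq_of_const _ _ _ (hxk i) (fun j hj => hpwin i j hj)
  have hoptk : ∀ i, xopt i ≤ k := by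
    intro i
    rw [← hxoptk]
    exact Finset.single_le_sum (f := xopt) (fun _ _ => Nat.zero_le _) (Finset.mem_univ i)
  have hterm : ∀ i, v i (xopt i) ≤ u i + (xopt i : ℝ) * p := by
    intro i
    rcases Nat.eq_zero_or_pos (xopt i) with h0 | h1
    · rw [h0, hv0 i]
      have := claim0 i
      push_cast
      linarith
    · have h2 := claim1 i (xopt i) h1 (hoptk i)
      have h3 := hγlep i (xopt i)
      have h4 : (xopt i : ℝ) * γ i (xopt i) ≤ (xopt i : ℝ) * p :=
        mul_le_mul_of_nonneg_left h3 (by positivity)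
      linarith
  have hsum1 : SW v xopt ≤ ∑ i, (u i + (xopt i : ℝ) * p) :=
    Finset.sum_le_sum (fun i _ => hterm i)
  have hcastx : ∑ i, ((x i : ℝ)) * p = (k : ℝ) * p := by
    rw [← Finset.sum_mul]
    congr 1
    rw [← Nat.cast_sum, hx.1]
  have hcastopt : ∑ i, ((xopt i : ℝ)) * p = (k : ℝ) * p := by
    rw [← Finset.sum_mul]
    congr 1
    rw [← Nat.cast_sum, hxoptk]
  have hu_sum : ∑ i, u i = SW v x - (k : ℝ) * p := by
    have h1 : ∀ i : Fin n, u i = v i (x i) - (x i : ℝ) * p := by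
      intro i
      rw [hui i, hpay i]
    rw [Finset.sum_congr rfl (fun i _ => h1 i), Finset.sum_sub_distrib, hcastx]
    rfl
  have hsum2 : ∑ i, (u i + (xopt i : ℝ) * p) = SW v x := by
    rw [Finset.sum_add_distrib, hu_sum, hcastopt]
    ring
  have hfinal : SW v xopt ≤ SW v x := by
    rw [hsum2] at hsum1
    exact hsum1
  have h2 := hxoptmax x hx.1
  linarith

end
end

section
/- Properties of pure Nash equilibria of the Discriminatory Auction: let v = (v_1,…,v_n) be arbitrary valuations with marginals m_i(j) = v_i(j) − v_i(j−1), n ≥ 2, and let b be a pure Nash equilibrium under discriminatory pricing (no bidder can strictly increase u_i^{v_i} by any unilateral deviation to a non-increasing non-negative bid vector). Let d = max{b_i(j) : i ∈ [n], j ∈ [k], j > x_i(b)} be the largest losing bid. Then: (i) for every bidder i with x_i(b) ≥ 1 and every j ∈ {1,…,x_i(b)}, b_i(j) = d; (ii) for every i ∈ [n] and every ℓ ∈ {1,…,x_i(b)}, ℓ·d ≤ Σ_{j = x_i(b)−ℓ+1}^{x_i(b)} m_i(j); (iii) for every i ∈ [n] and every ℓ ∈ {1,…,k − x_i(b)}, Σ_{j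 = x_i(b)+1}^{x_i(b)+ℓ} m_i(j) ≤ ℓ·d. -/
open Finset MeasureTheory

noncomputable section

namespace Stmt18Aux

open Finset

variable {n k : ℕ}

def enc (k : ℕ) (p : Fin n × Fin k) : ℕ := p.1.val * k + p.2.val

lemma enc_lt_of {p q : Fin n × Fin k}
    (h : p.1.val < q.1.val ∨ (p.1.val = q.1.val ∧ p.2.val < q.2.val)) :
    enc k p < enc k q := by
  have h2 := p.2.isLt
  rcases h with h | ⟨h1, h2'⟩
  · have h3 : p.1.val * k + k ≤ q.1.val * k := by
      rw [← Nat.succ_mul]; exact Nat.mul_le_mul_right _ h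
    unfold enc; omega
  · unfold enc; rw [h1]; omega

lemma enc_injective : Function.Injective (enc k (n := n)) := by
  intro p q h
  rcases Nat.lt_trichotomy p.1.val q.1.val with h1 | h1 | h1
  · exact absurd h (Nat.ne_of_lt (enc_lt_of (Or.inl h1)))
  · rcases Nat.lt_trichotomy p.2.val q.2.val with h2 | h2 | h2
    · exact absurd h (Nat.ne_of_lt (enc_lt_of (Or.inr ⟨h1, h2⟩)))
    · exact Prod.ext (Fin.ext h1) (Fin.ext h2)
    · exact absurd h.symm (Nat.ne_of_lt (enc_lt_of (Or.inr ⟨h1.symm, h2⟩)))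
  · exact absurd h.symm (Nat.ne_of_lt (enc_lt_of (Or.inl h1)))

/-- priority: `p` strictly before `q`. -/
def R (b : Fin n → Bid k) (p q : Fin n × Fin k) : Prop :=
  b q.1 q.2 < b p.1 p.2 ∨ (b p.1 p.2 = b q.1 q.2 ∧ enc k p < enc k q)

noncomputable instance (b : Fin n → Bid k) (p q : Fin n × Fin k) : Decidable (R b p q) := by
  unfold R; infer_instance

lemma R_trans {b : Fin n → Bid k} {p q r} (h1 : R b p q) (h2 : R b q r) : R b p r := by
  rcases h1 with h1 | ⟨e1, l1⟩ <;> rcases h2 with h2 | ⟨e2, l2⟩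
  · exact Or.inl (h2.trans h1)
  · exact Or.inl (e2 ▸ h1)
  · exact Or.inl (e1 ▸ h2)
  · exact Or.inr ⟨e1.trans e2, l1.trans l2⟩

lemma R_irrefl {b : Fin n → Bid k} (p) : ¬ R b p p := by
  rintro (h | ⟨_, h⟩) <;> exact lt_irrefl _ h

lemma R_total {b : Fin n → Bid k} {p q} (h : p ≠ q) : R b p q ∨ R b q p := by
  rcases lt_trichotomy (b p.1 p.2) (b q.1 q.2) with h1 | h1 | h1
  · exact Or.inr (Or.inl h1)
  · rcases Nat.lt_trichotomy (enc k p) (enc k q) with h2 | h2 | h2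
    · exact Or.inl (Or.inr ⟨h1, h2⟩)
    · exact absurd (enc_injective h2) h
    · exact Or.inr (Or.inr ⟨h1.symm, h2⟩)
  · exact Or.inl (Or.inl h1)

noncomputable def rank (b : Fin n → Bid k) (p : Fin n × Fin k) : ℕ :=
  (univ.filter fun q => R b q p).card

lemma rank_lt_of_R {b : Fin n → Bid k} {p q} (h : R b p q) : rank b p < rank b q := by
  apply Finset.card_lt_card
  rw [Finset.ssubset_iff_of_subset]
  · exact ⟨p, by simpa using h, by simpa using R_irrefl (b := b) p⟩
  · intro r hr
    simp only [mem_filter, mem_univ, true_and] at hr ⊢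
    exact R_trans hr h

lemma rank_lt_card {b : Fin n → Bid k} (p) : rank b p < Fintype.card (Fin n × Fin k) := by
  rw [← Finset.card_univ]
  apply Finset.card_lt_card
  rw [Finset.ssubset_iff_of_subset (Finset.filter_subset _ _)]
  exact ⟨p, mem_univ p, by simpa using R_irrefl (b := b) p⟩

lemma rank_injective (b : Fin n → Bid k) : Function.Injective (rank b) := by
  intro p q h
  by_contra hne
  rcases R_total (b := b) hne with h1 | h1
  · exact absurd h (Nat.ne_of_lt (rank_lt_of_R h1))
  · exact absurd h.symm (Nat.ne_of_lt (rank_lt_of_R h1))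

lemma card_rank_lt (b : Fin n → Bid k) (hkn : k ≤ Fintype.card (Fin n × Fin k)) :
    (univ.filter fun p => rank b p < k).card = k := by
  set N := Fintype.card (Fin n × Fin k) with hN
  have him : (univ : Finset (Fin n × Fin k)).image (rank b) = Finset.range N := by
    apply Finset.eq_of_subset_of_card_le
    · intro a ha
      simp only [mem_image, mem_univ, true_and] at ha
      obtain ⟨p, rfl⟩ := ha
      exact Finset.mem_range.mpr (rank_lt_card p)
    · rw [Finset.card_range, Finset.card_image_of_injective _ (rank_injective b),
        Finset.card_univ]
  have h1 : (univ.filter fun p => rank b p < k).card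
      = ((univ.filter fun p => rank b p < k).image (rank b)).card :=
    (Finset.card_image_of_injective _ (rank_injective b)).symm
  have h2 := Finset.filter_image (s := (univ : Finset (Fin n × Fin k)))
    (f := rank b) (p := fun a => a < k)
  rw [h1, ← h2, him]
  have : (Finset.range N).filter (fun a => a < k) = Finset.range k := by
    ext a; simp only [mem_filter, mem_range]; omega
  rw [this, Finset.card_range]

lemma mem_iff_lt_card (s : Finset (Fin k))
    (hs : ∀ a ∈ s, ∀ b : Fin k, b ≤ a → b ∈ s) (j : Fin k) :
    j ∈ s ↔ (j : ℕ) < s.card := by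
  constructor
  · intro hj
    have h1 : Finset.Iic j ⊆ s := fun a ha => hs j hj a (Finset.mem_Iic.mp ha)
    have h2 := Finset.card_le_card h1
    rw [Fin.card_Iic] at h2
    omega
  · intro hj
    by_contra hns
    have h1 : s ⊆ Finset.Iio j := by
      intro a ha
      rw [Finset.mem_Iio]
      by_contra hle
      exact hns (hs a ha j (le_of_not_gt hle))
    have h2 := Finset.card_le_card h1
    rw [Fin.card_Iio] at h2
    omega

lemma exists_validAlloc (hn : 1 ≤ n) (b : Fin n → Bid k) (hb : ∀ i, StdBid (b i)) :
    ∃ y, ValidAlloc b y := by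
  classical
  set y : Fin n → ℕ := fun i => (univ.filter fun j : Fin k => rank b (i, j) < k).card with hy
  have hR : ∀ (i : Fin n) (j j' : Fin k), (j : ℕ) < (j' : ℕ) → R b (i, j) (i, j') := by
    intro i j j' hjj
    have h1 : b i j' ≤ b i j := (hb i).1 j j' (Fin.le_def.mpr (le_of_lt hjj))
    rcases h1.lt_or_eq with h2 | h2
    · exact Or.inl h2
    · exact Or.inr ⟨h2.symm, enc_lt_of (Or.inr ⟨rfl, hjj⟩)⟩
  have hmem : ∀ (i : Fin n) (j : Fin k), (j : ℕ) < y i ↔ rank b (i, j) < k := by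
    intro i j
    have := (mem_iff_lt_card (univ.filter fun j : Fin k => rank b (i, j) < k) ?_ j).symm
    · simpa using this
    · intro a ha c hca
      simp only [mem_filter, mem_univ, true_and] at ha ⊢
      rcases eq_or_lt_of_le hca with h | h
      · rw [show c = a from Fin.ext (by exact_mod_cast congrArg Fin.val h)]
        exact ha
      · exact lt_trans (rank_lt_of_R (hR i c a h)) ha
  refine ⟨y, ?_, ?_⟩
  · have hcard : k ≤ Fintype.card (Fin n × Fin k) := by
      simp only [Fintype.card_prod, Fintype.card_fin]
      calc k = 1 * k := (one_mul k).symm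
      _ ≤ n * k := Nat.mul_le_mul_right k hn
    have h1 := card_rank_lt b hcard
    rw [← h1]
    rw [Finset.card_filter, Fintype.sum_prod_type]
    simp only [hy, Finset.card_filter]
  · intro i i' j j' hj hj'
    rw [hmem] at hj
    have hj'2 : ¬ rank b (i', j') < k := fun h => by
      rw [← hmem] at h; omega
    by_contra hlt
    push_neg at hlt
    have h := rank_lt_of_R (b := b) (Or.inl hlt : R b (i', j') (i, j))
    omega

lemma card_filter_lt_val (q : ℕ) (hq : q ≤ k) :
    (univ.filter fun j : Fin k => (j : ℕ) < q).card = q := by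
  have h1 : (univ.filter fun j : Fin k => (j : ℕ) < q).card
      = ((univ.filter fun j : Fin k => (j : ℕ) < q).image Fin.val).card :=
    (Finset.card_image_of_injective _ Fin.val_injective).symm
  rw [h1]
  have h2 : (univ.filter fun j : Fin k => (j : ℕ) < q).image Fin.val = Finset.range q := by
    ext a
    simp only [mem_image, mem_filter, mem_univ, true_and, mem_range]
    constructor
    · rintro ⟨j, hj, rfl⟩; exact hj
    · intro ha; exact ⟨⟨a, lt_of_lt_of_le ha hq⟩, ha, rfl⟩
  rw [h2, Finset.card_range]

lemma winSum_const {b : Bid k} {q : ℕ} (hq : q ≤ k) {c : ℝ}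
    (h : ∀ j : Fin k, (j : ℕ) < q → b j = c) : winSum b q = (q : ℝ) * c := by
  unfold winSum
  have h1 : ∀ j : Fin k, (if (j : ℕ) < q then b j else 0) = (if (j : ℕ) < q then c else 0) := by
    intro j; split_ifs with hj
    · exact h j hj
    · rfl
  rw [Finset.sum_congr rfl fun j _ => h1 j, Finset.sum_ite, Finset.sum_const,
    Finset.sum_const_zero, add_zero, card_filter_lt_val q hq, nsmul_eq_mul]

lemma winSum_unif (c : ℝ) (m q : ℕ) (hm : m ≤ q) (hq : q ≤ k) :
    winSum (fun j : Fin k => if (j : ℕ) < m then c else 0) q = (m : ℝ) * c := by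
  unfold winSum
  have h1 : ∀ j : Fin k, (if (j : ℕ) < q then (if (j : ℕ) < m then c else 0) else 0)
      = (if (j : ℕ) < m then c else 0) := by
    intro j
    split_ifs with h1 h2 <;> first | rfl | (exfalso; omega)
  rw [Finset.sum_congr rfl fun j _ => h1 j, Finset.sum_ite, Finset.sum_const,
    Finset.sum_const_zero, add_zero, card_filter_lt_val m (hm.trans hq), nsmul_eq_mul]

lemma tel (f : ℕ → ℝ) (a : ℕ) : ∀ ℓ : ℕ,
    ∑ j ∈ Finset.Icc (a + 1) (a + ℓ), (f j - f (j - 1)) = f (a + ℓ) - f a := by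
  intro ℓ
  induction ℓ with
  | zero => simp
  | succ t ih =>
    have h1 : a + (t + 1) = (a + t) + 1 := by omega
    rw [h1, Finset.sum_Icc_succ_top (by omega : a + 1 ≤ a + t + 1), ih]
    have h2 : a + t + 1 - 1 = a + t := by omega
    rw [h2]; ring

end Stmt18Aux

/-- Properties of pure Nash equilibria of the Discriminatory
Auction: if `b` is a pure Nash equilibrium and `d` is the largest losing bid, then
(i) all winning bids equal `d`; (ii) `ℓ·d ≤ ∑_{j=xᵢ-ℓ+1}^{xᵢ} mᵢ(j)` for every
`ℓ ∈ {1,…,xᵢ}`; (iii) `∑_{j=xᵢ+1}^{xᵢ+ℓ} mᵢ(j) ≤ ℓ·d` for every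
`ℓ ∈ {1,…,k-xᵢ}`, where `mᵢ(j) = vᵢ(j) - vᵢ(j-1)` are the marginal values. -/
theorem stmt18 (n k : ℕ) (hk : 1 ≤ k) (hn : 2 ≤ n)
    -- arbitrary valuations
    (v : Fin n → ℕ → ℝ) (hv : ∀ i, IsValuation k (v i))
    -- the equilibrium bidding profile and its allocation
    (b : Fin n → Bid k) (hb : ∀ i, StdBid (b i))
    (x : Fin n → ℕ) (hx : ValidAlloc b x)
    -- `b` is a pure Nash equilibrium
    (hNE : ∀ (i : Fin n) (b' : Bid k), StdBid b' →
      ∀ y : Fin n → ℕ, ValidAlloc (Function.update b i b') y →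
        v i (y i) - winSum b' (y i) ≤ v i (x i) - winSum (b i) (x i))
    -- `d` is the largest losing bid
    (d : ℝ)
    (hd : IsGreatest {r : ℝ | ∃ (i : Fin n) (j : Fin k), x i ≤ (j : ℕ) ∧ b i j = r} d) :
    -- (i) every winning bid equals `d`
    (∀ i : Fin n, 1 ≤ x i → ∀ j : Fin k, (j : ℕ) < x i → b i j = d) ∧
    -- (ii)
    (∀ (i : Fin n) (ℓ : ℕ), 1 ≤ ℓ → ℓ ≤ x i →
      (ℓ : ℝ) * d ≤ ∑ j ∈ Finset.Icc (x i - ℓ + 1) (x i), (v i j - v i (j - 1))) ∧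
    -- (iii)
    (∀ (i : Fin n) (ℓ : ℕ), 1 ≤ ℓ → ℓ ≤ k - x i →
      (∑ j ∈ Finset.Icc (x i + 1) (x i + ℓ), (v i j - v i (j - 1))) ≤ (ℓ : ℝ) * d) := by
  classical
  obtain ⟨hxsum, hxval⟩ := hx
  have hxk : ∀ i, x i ≤ k := by
    intro i
    rw [← hxsum]
    exact Finset.single_le_sum (f := x) (fun i _ => Nat.zero_le _) (mem_univ i)
  obtain ⟨⟨i₀, j₀, hj₀, hbj₀⟩, hdub⟩ := hd
  have hd0 : 0 ≤ d := hbj₀ ▸ (hb i₀).2 j₀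
  have hlose_le : ∀ (i : Fin n) (j : Fin k), x i ≤ (j : ℕ) → b i j ≤ d :=
    fun i j h => hdub ⟨i, j, h, rfl⟩
  have hwin_ge : ∀ (i : Fin n) (j : Fin k), (j : ℕ) < x i → d ≤ b i j := by
    intro i j hj
    calc d = b i₀ j₀ := hbj₀.symm
    _ ≤ b i j := hxval i i₀ j j₀ hj hj₀
  -- part (i)
  have hpart1 : ∀ (i : Fin n) (j : Fin k), (j : ℕ) < x i → b i j = d := by
    intro i j hj
    set b' : Bid k := fun j : Fin k => if (j : ℕ) < x i then d else 0 with hb'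
    have hstd' : StdBid b' := by
      constructor
      · intro j1 j2 h12
        simp only [hb']
        split_ifs with h1 h2 <;>
          first
            | exact le_refl _
            | exact hd0
            | (exfalso; rw [Fin.le_def] at h12; omega)
      · intro j1
        simp only [hb']
        split_ifs
        · exact hd0
        · exact le_refl 0
    have hval' : ValidAlloc (Function.update b i b') x := by
      refine ⟨hxsum, ?_⟩
      intro i1 i2 j1 j2 hj1 hj2
      by_cases h1 : i1 = i <;> by_cases h2 : i2 = i
      · subst h1; subst h2
        rw [Function.update_self]
        simp only [hb']
        rw [if_pos hj1, if_neg (by omega)]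
        exact hd0
      · subst h1
        rw [Function.update_self, Function.update_of_ne h2]
        simp only [hb']
        rw [if_pos hj1]
        exact hlose_le i2 j2 hj2
      · subst h2
        rw [Function.update_self, Function.update_of_ne h1]
        simp only [hb']
        rw [if_neg (by omega)]
        exact (hb i1).2 j1
      · rw [Function.update_of_ne h1, Function.update_of_ne h2]
        exact hxval i1 i2 j1 j2 hj1 hj2
    have hne := hNE i b' hstd' x hval'
    have hws' : winSum b' (x i) = (x i : ℝ) * d :=
      Stmt18Aux.winSum_const (hxk i) (fun j hj => by simp only [hb']; rw [if_pos hj])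
    have hle : winSum (b i) (x i) ≤ (x i : ℝ) * d := by
      rw [hws'] at hne; linarith
    by_contra hne2
    have hgt : d < b i j := lt_of_le_of_ne (hwin_ge i j hj) (Ne.symm hne2)
    have hlt : (x i : ℝ) * d < winSum (b i) (x i) := by
      have h1 : winSum (b i) (x i)
          = ∑ j' ∈ univ.filter (fun j' : Fin k => (j' : ℕ) < x i), b i j' := by
        unfold winSum; rw [Finset.sum_filter]
      have h2 : (x i : ℝ) * d
          = ∑ _j' ∈ univ.filter (fun j' : Fin k => (j' : ℕ) < x i), d := by
        rw [Finset.sum_const, Stmt18Aux.card_filter_lt_val (x i) (hxk i), nsmul_eq_mul]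
      rw [h1, h2]
      apply Finset.sum_lt_sum
      · intro j' hj'
        exact hwin_ge i j' (by simpa using hj')
      · exact ⟨j, by simpa using hj, hgt⟩
    linarith
  have hwinsum : ∀ i, winSum (b i) (x i) = (x i : ℝ) * d :=
    fun i => Stmt18Aux.winSum_const (hxk i) (fun j hj => hpart1 i j hj)
  have hall_le : ∀ (i : Fin n) (j : Fin k), b i j ≤ d := by
    intro i j
    by_cases hj : (j : ℕ) < x i
    · exact le_of_eq (hpart1 i j hj)
    · exact hlose_le i j (by omega)
  -- the key deviation claim
  have hclaim : ∀ (i : Fin n) (m : ℕ), m ≤ k →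
      v i m - (m : ℝ) * d ≤ v i (x i) - (x i : ℝ) * d := by
    intro i m hm
    have hstep : ∀ ε : ℝ, 0 < ε →
        v i m - (m : ℝ) * (d + ε) ≤ v i (x i) - (x i : ℝ) * d := by
      intro ε hε
      set b' : Bid k := fun j : Fin k => if (j : ℕ) < m then d + ε else 0 with hb'
      have hstd' : StdBid b' := by
        constructor
        · intro j1 j2 h12
          simp only [hb']
          split_ifs with h1 h2 <;>
            first
              | exact le_refl _
              | linarith
              | (exfalso; rw [Fin.le_def] at h12; omega)
        · intro j1
          simp only [hb']
          split_ifs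
          · linarith
          · exact le_refl 0
      have hbu : ∀ i', StdBid (Function.update b i b' i') := by
        intro i'
        by_cases h : i' = i
        · subst h; rw [Function.update_self]; exact hstd'
        · rw [Function.update_of_ne h]; exact hb i'
      obtain ⟨y, hy1, hy2⟩ := Stmt18Aux.exists_validAlloc (by omega) _ hbu
      have hyk : ∀ i', y i' ≤ k := by
        intro i'
        rw [← hy1]
        exact Finset.single_le_sum (f := y) (fun i _ => Nat.zero_le _) (mem_univ i')
      have hyi : m ≤ y i := by
        by_contra hlt
        push_neg at hlt
        have hjlt : y i < k := lt_of_lt_of_le hlt hm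
        obtain ⟨i', hne', hyi'⟩ : ∃ i', i' ≠ i ∧ 1 ≤ y i' := by
          by_contra hno
          push_neg at hno
          have hz : ∀ i' ∈ (univ : Finset (Fin n)), i' ≠ i → y i' = 0 := by
            intro i' _ hne'
            have := hno i' hne'
            omega
          have hsy := Finset.sum_eq_single (s := univ) (f := y) i hz
            (fun h => absurd (mem_univ i) h)
          omega
        have hcmp := hy2 i' i ⟨0, by omega⟩ ⟨y i, hjlt⟩ (by show 0 < y i'; omega) (by simp)
        rw [Function.update_self, Function.update_of_ne hne'] at hcmp
        have hv1 : b' ⟨y i, hjlt⟩ = d + ε := by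
          simp only [hb']
          exact if_pos hlt
        have hv2 : b i' ⟨0, by omega⟩ ≤ d := hall_le i' _
        rw [hv1] at hcmp
        linarith
      have hnei := hNE i b' hstd' y ⟨hy1, hy2⟩
      have hws : winSum b' (y i) = (m : ℝ) * (d + ε) :=
        Stmt18Aux.winSum_unif _ m (y i) hyi (hyk i)
      have hmono : v i m ≤ v i (y i) := (hv i).2.2 m (y i) hyi (hyk i)
      rw [hws, hwinsum i] at hnei
      linarith
    refine le_of_forall_pos_le_add ?_
    intro ε hε
    have h1 := hstep (ε / (m + 1)) (by positivity)
    have hm1 : (0 : ℝ) < (m : ℝ) + 1 := by positivity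
    have h2 : (m : ℝ) * (ε / ((m : ℝ) + 1)) ≤ ε := by
      rw [← mul_div_assoc, div_le_iff₀ hm1]
      nlinarith [Nat.cast_nonneg (α := ℝ) m]
    linarith
  refine ⟨fun i _ j hj => hpart1 i j hj, ?_, ?_⟩
  · intro i ℓ h1 h2
    have hm : x i - ℓ ≤ k := le_trans (Nat.sub_le _ _) (hxk i)
    have hcl := hclaim i (x i - ℓ) hm
    have ht := Stmt18Aux.tel (v i) (x i - ℓ) ℓ
    rw [show x i - ℓ + ℓ = x i from by omega] at ht
    rw [ht]
    have hc : ((x i - ℓ : ℕ) : ℝ) = (x i : ℝ) - (ℓ : ℝ) := by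
      exact Nat.cast_sub h2
    rw [hc] at hcl
    linarith
  · intro i ℓ h1 h2
    have hm : x i + ℓ ≤ k := by
      have := hxk i
      omega
    have hcl := hclaim i (x i + ℓ) hm
    have ht := Stmt18Aux.tel (v i) (x i) ℓ
    rw [ht]
    push_cast at hcl
    linarith

end
end
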